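/- arXiv:2208.01870 — 2 statements merged into one kernel-verified Lean document; each statement's English description precedes it below -/
import Mathlib

section
/- For all real x > 0 and x̃ > 0, sqrt(2x/(1+x)) ≤ q(x̃)·ln(1+x) + r(x̃), where q(x̃) = 1/sqrt(2x̃(1+x̃)) and r(x̃) = sqrt(2x̃/(1+x̃)) − q(x̃)·ln(1+x̃). -/
/-- Tangent-line upper bound for the concave map `x ↦ √(2x/(1+x))`:
for all `x, x̃ > 0`, `√(2x/(1+x)) ≤ q(x̃)·ln(1+x) + r(x̃)` where
`q(x̃) = 1/√(2x̃(1+x̃))` and `r(x̃) = √(2x̃/(1+x̃)) − q(x̃)·ln(1+x̃)`. -/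
theorem stmt_0 (x xt : ℝ) (hx : 0 < x) (hxt : 0 < xt) :
    Real.sqrt (2 * x / (1 + x)) ≤
      (1 / Real.sqrt (2 * xt * (1 + xt))) * Real.log (1 + x) +
        (Real.sqrt (2 * xt / (1 + xt)) -
          (1 / Real.sqrt (2 * xt * (1 + xt))) * Real.log (1 + xt)) := by
  have h1x : (0:ℝ) < 1 + x := by linarith
  have h1t : (0:ℝ) < 1 + xt := by linarith
  set a := Real.sqrt (2 * x / (1 + x)) with ha
  set b := Real.sqrt (2 * xt / (1 + xt)) with hb
  set c := Real.sqrt (2 * xt * (1 + xt)) with hc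
  have ha0 : 0 ≤ a := Real.sqrt_nonneg _
  have hb0 : 0 ≤ b := Real.sqrt_nonneg _
  have hc0 : 0 < c := Real.sqrt_pos.mpr (by positivity)
  have ha2 : a ^ 2 = 2 * x / (1 + x) := Real.sq_sqrt (by positivity)
  have hb2 : b ^ 2 = 2 * xt / (1 + xt) := Real.sq_sqrt (by positivity)
  have hcb : c = (1 + xt) * b := by
    rw [hc, hb, show 2 * xt * (1 + xt) = (1 + xt) ^ 2 * (2 * xt / (1 + xt)) by
      field_simp, Real.sqrt_mul (by positivity), Real.sqrt_sq h1t.le]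
  -- polynomial facts
  have hax : a ^ 2 * (1 + x) = 2 * x := by rw [ha2]; field_simp
  have hbt : b ^ 2 * (1 + xt) = 2 * xt := by rw [hb2]; field_simp
  -- key tangent inequality at the algebraic level
  have hid : x - xt - (1 + xt) * b * (1 + x) * (a - b)
      = (1 + x) * (1 + xt) * (a - b) ^ 2 / 2 := by
    linear_combination (-(1 + xt) / 2) * hax + ((1 + x) / 2) * hbt
  have hkey : c * (1 + x) * (a - b) ≤ x - xt := by
    rw [hcb]
    nlinarith [mul_nonneg (mul_nonneg h1x.le h1t.le) (sq_nonneg (a - b))]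
  -- log bound
  have hlog : (x - xt) / (1 + x) ≤ Real.log (1 + x) - Real.log (1 + xt) := by
    have h := Real.log_le_sub_one_of_pos (show 0 < (1 + xt) / (1 + x) by positivity)
    rw [Real.log_div h1t.ne' h1x.ne'] at h
    have h2 : (1 + xt) / (1 + x) - 1 = (xt - x) / (1 + x) := by field_simp; ring
    rw [h2] at h
    have h3 : (x - xt) / (1 + x) = -((xt - x) / (1 + x)) := by ring
    linarith [h3 ▸ (neg_le_neg h)]
  -- combine
  have hd : a - b ≤ (x - xt) / (c * (1 + x)) := by
    rw [le_div_iff₀ (by positivity)]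
    nlinarith [hkey]
  have he : (x - xt) / (c * (1 + x)) ≤ (1 / c) * (Real.log (1 + x) - Real.log (1 + xt)) := by
    have : (x - xt) / (c * (1 + x)) = (1 / c) * ((x - xt) / (1 + x)) := by
      field_simp
    rw [this]
    exact mul_le_mul_of_nonneg_left hlog (by positivity)
  nlinarith [hd.trans he]
end

section
/- The inverse Q-function Q^{-1}(x) is convex on the interval (0, 1/2). -/
/-- The Gaussian tail function `Q(x) = (1/√(2π)) ∫_x^∞ e^{−t²/2} dt`. -/
noncomputable def gaussQ (x : ℝ) : ℝ :=
  (1 / Real.sqrt (2 * Real.pi)) * ∫ t in Set.Ioi x, Real.exp (-(t ^ 2) / 2)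

/-- The inverse of the Gaussian tail function. -/
noncomputable def gaussQinv : ℝ → ℝ := Function.invFun gaussQ

open Set MeasureTheory Real Filter

lemma gauss_integrable : Integrable (fun t : ℝ => Real.exp (-(t ^ 2) / 2)) := by
  have h := integrable_exp_neg_mul_sq (show (0:ℝ) < 1/2 by norm_num)
  convert h using 2 with t
  ring_nf

lemma gauss_continuous : Continuous (fun t : ℝ => Real.exp (-(t ^ 2) / 2)) := by
  fun_prop

lemma sqrt_two_pi_pos : 0 < Real.sqrt (2 * Real.pi) :=
  Real.sqrt_pos.mpr (by positivity)

lemma hasDerivAt_gaussQ (x : ℝ) :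
    HasDerivAt gaussQ (-(1 / Real.sqrt (2 * Real.pi) * Real.exp (-(x ^ 2) / 2))) x := by
  set f : ℝ → ℝ := fun t => Real.exp (-(t ^ 2) / 2) with hf
  set c : ℝ := 1 / Real.sqrt (2 * Real.pi) with hc
  set a : ℝ := x - 1 with ha
  have hax : a < x := by simp [ha]
  have key : ∀ y, a < y →
      (∫ t in Ioi a, f t) = (∫ t in a..y, f t) + ∫ t in Ioi y, f t := by
    intro y hy
    rw [intervalIntegral.integral_of_le hy.le]
    rw [← MeasureTheory.setIntegral_union (Set.Ioc_disjoint_Ioi le_rfl)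
      measurableSet_Ioi gauss_integrable.integrableOn gauss_integrable.integrableOn,
      Set.Ioc_union_Ioi_eq_Ioi hy.le]
  have hFTC0 : HasDerivAt (fun y => ∫ t in a..y, f t) (f x) x :=
    intervalIntegral.integral_hasDerivAt_right
      gauss_integrable.intervalIntegrable
      (gauss_continuous.stronglyMeasurableAtFilter _ _)
      gauss_continuous.continuousAt
  have hFTC : HasDerivAt (fun y => c * ((∫ t in Ioi a, f t) - ∫ t in a..y, f t))
      (c * -(f x)) x := (hFTC0.const_sub (∫ t in Ioi a, f t)).const_mul c
  have heq : (fun y => c * ((∫ t in Ioi a, f t) - ∫ t in a..y, f t)) =ᶠ[nhds x] gaussQ := by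
    filter_upwards [Ioi_mem_nhds hax] with y hy
    have := key y hy
    simp only [gaussQ, ← hc]
    rw [this]
    ring
  have := hFTC.congr_of_eventuallyEq heq.symm
  refine this.congr_deriv ?_
  simp only [hf]; ring

lemma gaussQ_strictAnti : StrictAnti gaussQ := by
  apply strictAnti_of_deriv_neg
  intro x
  rw [(hasDerivAt_gaussQ x).deriv]
  have h1 : 0 < 1 / Real.sqrt (2 * Real.pi) * Real.exp (-(x ^ 2) / 2) := by
    have := sqrt_two_pi_pos
    positivity
  linarith

lemma gaussQ_convexOn : ConvexOn ℝ (Ici (0:ℝ)) gaussQ := by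
  have hdiff : ∀ x : ℝ, DifferentiableAt ℝ gaussQ x :=
    fun x => (hasDerivAt_gaussQ x).differentiableAt
  apply MonotoneOn.convexOn_of_deriv (convex_Ici 0)
    ((Differentiable.continuous hdiff).continuousOn)
    (fun x _ => (hdiff x).differentiableWithinAt)
  intro x hx y hy hxy
  rw [interior_Ici] at hx hy
  rw [(hasDerivAt_gaussQ x).deriv, (hasDerivAt_gaussQ y).deriv]
  have hsq : x ^ 2 ≤ y ^ 2 := by nlinarith [(mem_Ioi.mp hx).le, (mem_Ioi.mp hy).le]
  have hexp : Real.exp (-(y ^ 2) / 2) ≤ Real.exp (-(x ^ 2) / 2) := by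
    apply Real.exp_le_exp.mpr; linarith
  have hcpos : (0:ℝ) < 1 / Real.sqrt (2 * Real.pi) := by
    have := sqrt_two_pi_pos; positivity
  nlinarith

lemma gaussQ_zero : gaussQ 0 = 1 / 2 := by
  have h : (∫ t in Ioi (0:ℝ), Real.exp (-(t ^ 2) / 2))
      = ∫ t in Ioi (0:ℝ), Real.exp (-(1/2) * t ^ 2) := by
    congr 1 with t
    ring_nf
  have h2 := integral_gaussian_Ioi (1/2 : ℝ)
  rw [gaussQ, h, h2]
  have : Real.pi / (1/2 : ℝ) = 2 * Real.pi := by ring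
  rw [this]
  have hs := sqrt_two_pi_pos
  field_simp

lemma neg_half_sq_atBot : Filter.Tendsto (fun M : ℝ => -(1/2) * M ^ 2) atTop atBot :=
  (tendsto_const_mul_atBot_of_neg (by norm_num)).mpr (tendsto_pow_atTop two_ne_zero)

lemma neg_sq_div_atBot : Filter.Tendsto (fun M : ℝ => -(M ^ 2) / 2) atTop atBot := by
  have h := neg_half_sq_atBot
  convert h using 2 with M
  ring

lemma gaussQ_tail_le {M : ℝ} (hM : 1 ≤ M) :
    gaussQ M ≤ 1 / Real.sqrt (2 * Real.pi) * Real.exp (-(M ^ 2) / 2) := by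
  have hint : (∫ t in Ioi M, t * Real.exp (-(1/2) * t ^ 2)) = Real.exp (-(M ^ 2) / 2) := by
    have hderiv : ∀ x ∈ Ici M, HasDerivAt (fun t : ℝ => -Real.exp (-(1/2) * t ^ 2))
        (x * Real.exp (-(1/2) * x ^ 2)) x := by
      intro x _
      have h1 : HasDerivAt (fun t : ℝ => -(1/2) * t ^ 2) (-(1/2) * (2 * x)) x := by
        simpa using ((hasDerivAt_pow 2 x).const_mul (-(1/2) : ℝ))
      have h2 := (h1.exp).neg
      refine h2.congr_deriv ?_
      ring
    have hintOn : IntegrableOn (fun t : ℝ => t * Real.exp (-(1/2) * t ^ 2)) (Ioi M) :=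
      (integrable_mul_exp_neg_mul_sq (by norm_num : (0:ℝ) < 1/2)).integrableOn
    have htend : Tendsto (fun t : ℝ => -Real.exp (-(1/2) * t ^ 2)) atTop (nhds 0) := by
      rw [show (0:ℝ) = -0 by ring]
      exact (Real.tendsto_exp_atBot.comp neg_half_sq_atBot).neg
    have := integral_Ioi_of_hasDerivAt_of_tendsto' hderiv hintOn htend
    rw [this]
    ring_nf
  have hmono : (∫ t in Ioi M, Real.exp (-(t ^ 2) / 2))
      ≤ ∫ t in Ioi M, t * Real.exp (-(1/2) * t ^ 2) := by
    apply setIntegral_mono_on gauss_integrable.integrableOn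
      (integrable_mul_exp_neg_mul_sq (by norm_num : (0:ℝ) < 1/2)).integrableOn
      measurableSet_Ioi
    intro t ht
    have ht1 : 1 ≤ t := hM.trans (le_of_lt ht)
    have : Real.exp (-(t ^ 2) / 2) = Real.exp (-(1/2) * t ^ 2) := by ring_nf
    rw [this]
    nlinarith [Real.exp_pos (-(1/2) * t ^ 2)]
  rw [gaussQ]
  rw [hint] at hmono
  have hcpos : (0:ℝ) < 1 / Real.sqrt (2 * Real.pi) := by
    have := sqrt_two_pi_pos; positivity
  exact mul_le_mul_of_nonneg_left hmono hcpos.le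

lemma gaussQ_surj {p : ℝ} (hp : p ∈ Ioo (0:ℝ) (1/2)) : ∃ x ≥ (0:ℝ), gaussQ x = p := by
  have htend : Tendsto (fun M : ℝ => 1 / Real.sqrt (2 * Real.pi) * Real.exp (-(M ^ 2) / 2))
      atTop (nhds 0) := by
    rw [show (0:ℝ) = 1 / Real.sqrt (2 * Real.pi) * 0 by ring]
    exact (Real.tendsto_exp_atBot.comp neg_sq_div_atBot).const_mul _
  obtain ⟨M, hM1, hMp⟩ : ∃ M : ℝ, 1 ≤ M ∧
      1 / Real.sqrt (2 * Real.pi) * Real.exp (-(M ^ 2) / 2) < p := by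
    have h1 := htend.eventually_lt_const hp.1
    obtain ⟨M, hM⟩ := (h1.and (eventually_ge_atTop (1:ℝ))).exists
    exact ⟨M, hM.2, hM.1⟩
  have hQM : gaussQ M < p := lt_of_le_of_lt (gaussQ_tail_le hM1) hMp
  have hcont : ContinuousOn gaussQ (Icc 0 M) :=
    (Differentiable.continuous fun x => (hasDerivAt_gaussQ x).differentiableAt).continuousOn
  have hsub := intermediate_value_Icc' (by linarith : (0:ℝ) ≤ M) hcont
  have hmem : p ∈ Icc (gaussQ M) (gaussQ 0) := by
    rw [gaussQ_zero]; exact ⟨hQM.le, hp.2.le⟩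
  obtain ⟨x, hx, hxp⟩ := hsub hmem
  exact ⟨x, hx.1, hxp⟩

/-- `Q⁻¹` is convex on `(0, 1/2)`. -/
theorem stmt_5 : ConvexOn ℝ (Set.Ioo (0 : ℝ) (1 / 2)) gaussQinv := by
  refine ⟨convex_Ioo _ _, ?_⟩
  intro p hp q hq a b ha hb hab
  simp only [smul_eq_mul]
  have hinj := gaussQ_strictAnti.injective
  have hinv : ∀ x : ℝ, gaussQinv (gaussQ x) = x := fun x =>
    Function.leftInverse_invFun hinj x
  obtain ⟨x, hx0, hxp⟩ := gaussQ_surj hp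
  obtain ⟨y, hy0, hyq⟩ := gaussQ_surj hq
  have hr : a * p + b * q ∈ Ioo (0:ℝ) (1/2) := by
    constructor
    · rcases eq_or_lt_of_le ha with h | h
      · simp only [← h, zero_mul, zero_add]
        have : b = 1 := by linarith
        rw [this, one_mul]; exact hq.1
      · have h1 : 0 < a * p := mul_pos h hp.1
        have h2 : 0 ≤ b * q := mul_nonneg hb hq.1.le
        linarith
    · rcases eq_or_lt_of_le ha with h | h
      · have : b = 1 := by linarith
        simp only [← h, zero_mul, zero_add, this, one_mul]; exact hq.2
      · have h1 : a * p < a * (1/2) := mul_lt_mul_of_pos_left hp.2 h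
        have h2 : b * q ≤ b * (1/2) := mul_le_mul_of_nonneg_left hq.2.le hb
        nlinarith
  obtain ⟨w, hw0, hwr⟩ := gaussQ_surj hr
  rw [← hwr, hinv, ← hxp, ← hyq, hinv, hinv]
  have hconv := gaussQ_convexOn.2 (mem_Ici.mpr hx0) (mem_Ici.mpr hy0) ha hb hab
  simp only [smul_eq_mul] at hconv
  rw [hxp, hyq, ← hwr] at hconv
  exact gaussQ_strictAnti.le_iff_ge.mp hconv
end
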